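/- arXiv:2305.13231 — 3 statements merged into one kernel-verified Lean document; each statement's English description precedes it below -/
import Mathlib

section
/- Let φ be a Laurent polynomial in one variable x over ℤ that is irreducible and not a generalized cyclotomic (i.e., it divides no Laurent polynomial of the form x^k − 1 with k ≠ 0). Then φ satisfies the spaced polynomial property: there exists N > 0 such that φ divides no nonzero Laurent polynomial u(x^N) with u having coefficients in {-1,0,1}. -/
open Polynomial LaurentPolynomial

namespace SpacedAux

lemma assoc_X_pow_of_isUnit_toLaurent (a : Polynomial ℤ)
    (h : IsUnit (Polynomial.toLaurent a)) : ∃ i : ℕ, Associated a (X ^ i) := by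
  obtain ⟨V, hV⟩ := h.exists_right_inv
  obtain ⟨n, q, hq⟩ := LaurentPolynomial.exists_T_pow V
  have key : Polynomial.toLaurent (a * q) = Polynomial.toLaurent ((X : Polynomial ℤ) ^ n) := by
    rw [map_mul, hq, Polynomial.toLaurent_X_pow, ← mul_assoc, hV, one_mul]
  have haq : a * q = X ^ n := Polynomial.toLaurent_injective key
  obtain ⟨i, _, hi⟩ := (dvd_prime_pow Polynomial.prime_X n).mp ⟨q, haq.symm⟩
  exact ⟨i, hi⟩

lemma isUnit_of_dvd_of_isUnit_toLaurent (p c : Polynomial ℤ) (h0 : ¬ (X : Polynomial ℤ) ∣ p)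
    (hdvd : c ∣ p) (h : IsUnit (Polynomial.toLaurent c)) : IsUnit c := by
  obtain ⟨i, hi⟩ := assoc_X_pow_of_isUnit_toLaurent c h
  match i with
  | 0 => exact associated_one_iff_isUnit.mp (by simpa using hi)
  | (i+1) =>
    exact absurd (((dvd_pow_self (X : Polynomial ℤ) (Nat.succ_ne_zero i)).trans
      hi.symm.dvd).trans hdvd) h0

lemma irreducible_of_toLaurent (p : Polynomial ℤ) (h0 : ¬ (X : Polynomial ℤ) ∣ p)
    (h : Irreducible (Polynomial.toLaurent p)) : Irreducible p := by
  refine ⟨fun hu => h.not_isUnit (hu.map Polynomial.toLaurent), fun a b hab => ?_⟩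
  rcases h.isUnit_or_isUnit (by rw [hab, map_mul]) with hu | hu
  · exact Or.inl (isUnit_of_dvd_of_isUnit_toLaurent p a h0 (Dvd.intro b hab.symm) hu)
  · exact Or.inr (isUnit_of_dvd_of_isUnit_toLaurent p b h0 (Dvd.intro_left a hab.symm) hu)

lemma dvd_of_toLaurent_dvd (p w : Polynomial ℤ) (hpp : Prime p) (h0 : ¬ (X : Polynomial ℤ) ∣ p)
    (h : Polynomial.toLaurent p ∣ Polynomial.toLaurent w) : p ∣ w := by
  obtain ⟨Q, hQ⟩ := h
  obtain ⟨n, q, hq⟩ := LaurentPolynomial.exists_T_pow Q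
  have key : Polynomial.toLaurent (w * X ^ n) = Polynomial.toLaurent (p * q) := by
    rw [map_mul, map_mul, Polynomial.toLaurent_X_pow, hq, hQ, mul_assoc]
  have h2 : w * X ^ n = p * q := Polynomial.toLaurent_injective key
  rcases hpp.dvd_or_dvd ⟨q, h2⟩ with h3 | h3
  · exact h3
  · obtain ⟨i, _, hi⟩ := (dvd_prime_pow Polynomial.prime_X n).mp h3
    match i with
    | 0 => exact (associated_one_iff_isUnit.mp (by simpa using hi)).dvd
    | (i+1) => exact absurd ((dvd_pow_self (X : Polynomial ℤ) (Nat.succ_ne_zero i)).trans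
        hi.symm.dvd) h0

lemma toLaurent_apply_int (g : Polynomial ℤ) (s : ℤ) :
    (Polynomial.toLaurent g).coeff s = if 0 ≤ s then g.coeff s.toNat else 0 := by
  rw [LaurentPolynomial.coeff_toLaurent]
  split_ifs with hs
  · conv_lhs => rw [show s = ((s.toNat : ℕ) : ℤ) by omega]
    exact Finsupp.mapDomain_apply Nat.castEmbedding.injective g.toFinsupp.coeff s.toNat
  · refine Finsupp.mapDomain_notin_range _ _ fun hmem => ?_
    obtain ⟨j, hj⟩ := hmem
    exact hs (hj ▸ Int.natCast_nonneg j)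

lemma sum_pow_le_half_pow (r : ℝ) (hr : 3 ≤ r) (d : ℕ) :
    ∑ i ∈ Finset.range d, r ^ i ≤ r ^ d / 2 := by
  induction d with
  | zero => norm_num
  | succ d ih =>
    rw [Finset.sum_range_succ, pow_succ]
    have h1 : (0:ℝ) < r ^ d := pow_pos (by linarith) d
    nlinarith

lemma sum_pow_le_threehalf (r : ℝ) (h0 : 0 ≤ r) (hr : r ≤ 1/3) :
    ∀ d : ℕ, ∑ i ∈ Finset.range d, r ^ i ≤ 3/2
  | 0 => by norm_num
  | (d+1) => by
    rw [Finset.sum_range_succ']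
    have h1 : ∑ i ∈ Finset.range d, r ^ (i+1) = r * ∑ i ∈ Finset.range d, r ^ i := by
      rw [Finset.mul_sum]
      exact Finset.sum_congr rfl fun i _ => by ring
    have h2 := sum_pow_le_threehalf r h0 hr d
    have h3 : (0:ℝ) ≤ ∑ i ∈ Finset.range d, r ^ i :=
      Finset.sum_nonneg fun i _ => pow_nonneg h0 i
    rw [h1]
    nlinarith

lemma aeval_ne_zero_big (v : Polynomial ℤ) (hv : v ≠ 0)
    (hc : ∀ j, v.coeff j = -1 ∨ v.coeff j = 0 ∨ v.coeff j = 1)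
    (z : ℂ) (hz : 3 ≤ ‖z‖) : (Polynomial.aeval z) v ≠ 0 := by
  intro h0
  set d := v.natDegree with hd
  have hlead : v.coeff d ≠ 0 := by
    rw [hd, Polynomial.coeff_natDegree]
    exact Polynomial.leadingCoeff_ne_zero.mpr hv
  have habs : ∀ j, ‖(v.coeff j : ℂ)‖ ≤ 1 := by
    intro j; rcases hc j with h | h | h <;> simp [h]
  have habs1 : ‖(v.coeff d : ℂ)‖ = 1 := by
    rcases hc d with h | h | h
    · simp [h]
    · exact absurd h hlead
    · simp [h]
  have heval : (Polynomial.aeval z) v = ∑ i ∈ Finset.range (d+1), (v.coeff i : ℂ) * z ^ i := by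
    rw [Polynomial.aeval_eq_sum_range]
    exact Finset.sum_congr rfl fun i _ => by rw [zsmul_eq_mul]
  rw [heval, Finset.sum_range_succ] at h0
  have h1 : ‖(v.coeff d : ℂ) * z ^ d‖ = ‖z‖ ^ d := by
    rw [norm_mul, habs1, one_mul, norm_pow]
  have h2 : ‖∑ i ∈ Finset.range d, (v.coeff i : ℂ) * z ^ i‖ ≤ ‖z‖ ^ d / 2 := by
    calc ‖∑ i ∈ Finset.range d, (v.coeff i : ℂ) * z ^ i‖
        ≤ ∑ i ∈ Finset.range d, ‖(v.coeff i : ℂ) * z ^ i‖ := norm_sum_le _ _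
      _ ≤ ∑ i ∈ Finset.range d, ‖z‖ ^ i := Finset.sum_le_sum fun i _ => by
          rw [norm_mul, norm_pow]
          exact mul_le_of_le_one_left (by positivity) (habs i)
      _ ≤ ‖z‖ ^ d / 2 := sum_pow_le_half_pow _ hz d
  have h3 : ‖(v.coeff d : ℂ) * z ^ d‖ = ‖∑ i ∈ Finset.range d, (v.coeff i : ℂ) * z ^ i‖ := by
    rw [eq_neg_of_add_eq_zero_right h0, norm_neg]
  have hpos : (0:ℝ) < ‖z‖ ^ d := pow_pos (by linarith) d
  rw [h1] at h3
  linarith [h3.le.trans h2]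

lemma aeval_ne_zero_small (v : Polynomial ℤ) (hv0 : v.coeff 0 ≠ 0)
    (hc : ∀ j, v.coeff j = -1 ∨ v.coeff j = 0 ∨ v.coeff j = 1)
    (z : ℂ) (hz : ‖z‖ ≤ 1/3) : (Polynomial.aeval z) v ≠ 0 := by
  intro h0
  set d := v.natDegree with hd
  have habs : ∀ j, ‖(v.coeff j : ℂ)‖ ≤ 1 := by
    intro j; rcases hc j with h | h | h <;> simp [h]
  have habs0 : ‖(v.coeff 0 : ℂ)‖ = 1 := by
    rcases hc 0 with h | h | h
    · simp [h]
    · exact absurd h hv0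
    · simp [h]
  have heval : (Polynomial.aeval z) v = ∑ i ∈ Finset.range (d+1), (v.coeff i : ℂ) * z ^ i := by
    rw [Polynomial.aeval_eq_sum_range]
    exact Finset.sum_congr rfl fun i _ => by rw [zsmul_eq_mul]
  rw [heval, Finset.range_eq_Ico, Finset.sum_eq_sum_Ico_succ_bot (Nat.succ_pos d)] at h0
  have h2 : ‖∑ i ∈ Finset.Ico 1 (d+1), (v.coeff i : ℂ) * z ^ i‖ ≤ 1/2 := by
    have c1 : ‖∑ i ∈ Finset.Ico 1 (d+1), (v.coeff i : ℂ) * z ^ i‖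
        ≤ ∑ i ∈ Finset.Ico 1 (d+1), ‖z‖ ^ i := by
      refine (norm_sum_le _ _).trans (Finset.sum_le_sum fun i _ => ?_)
      rw [norm_mul, norm_pow]
      exact mul_le_of_le_one_left (by positivity) (habs i)
    have c2 : ∑ i ∈ Finset.Ico 1 (d+1), ‖z‖ ^ i = ‖z‖ * ∑ i ∈ Finset.range d, ‖z‖ ^ i := by
      rw [Finset.sum_Ico_eq_sum_range]
      simp only [Nat.add_sub_cancel]
      rw [Finset.mul_sum]
      exact Finset.sum_congr rfl fun i _ => by ring
    have c3 := sum_pow_le_threehalf ‖z‖ (norm_nonneg z) hz d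
    have c4 : (0:ℝ) ≤ ∑ i ∈ Finset.range d, ‖z‖ ^ i :=
      Finset.sum_nonneg fun i _ => pow_nonneg (norm_nonneg z) i
    have c5 : (0:ℝ) ≤ ‖z‖ := norm_nonneg z
    calc ‖∑ i ∈ Finset.Ico 1 (d+1), (v.coeff i : ℂ) * z ^ i‖
        ≤ ‖z‖ * ∑ i ∈ Finset.range d, ‖z‖ ^ i := by rw [← c2]; exact c1
      _ ≤ 1/2 := by nlinarith
  have h3 : ‖(v.coeff 0 : ℂ) * z ^ 0‖ = 1 := by rw [pow_zero, mul_one, habs0]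
  have h4 : ‖(v.coeff 0 : ℂ) * z ^ 0‖
      = ‖∑ i ∈ Finset.Ico 1 (d+1), (v.coeff i : ℂ) * z ^ i‖ := by
    rw [eq_neg_of_add_eq_zero_left h0, norm_neg]
  rw [h3] at h4
  linarith [h4.le.trans h2]

end SpacedAux

open SpacedAux IntermediateField

/-- An irreducible one-variable Laurent polynomial over `ℤ` which is not a generalized
cyclotomic (divides no `x^k - 1` with `k ≠ 0`) satisfies the spaced polynomial property:
there is `N > 0` such that `φ` divides no nonzero Laurent polynomial `u(x^N)` where all
coefficients of `u` lie in `{-1,0,1}`. -/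
theorem one_variable_spaced_polynomial_property (φ : LaurentPolynomial ℤ)
    (hirr : Irreducible φ)
    (hnc : ∀ k : ℤ, k ≠ 0 → ¬ φ ∣ (LaurentPolynomial.T k - 1)) :
    ∃ N : ℕ, 0 < N ∧ ∀ u : LaurentPolynomial ℤ, u ≠ 0 →
      (∀ n : ℤ, u.coeff n ∈ ({-1, 0, 1} : Set ℤ)) →
      ¬ φ ∣ AddMonoidAlgebra.mapDomain (fun n : ℤ => (N : ℤ) * n) u := by
  classical
  have hφ0 : φ ≠ 0 := hirr.ne_zero
  obtain ⟨n, p, hp⟩ := LaurentPolynomial.exists_T_pow φ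
  have hpne : p ≠ 0 := by
    intro h
    apply hφ0
    have h1 : φ * T (n:ℤ) = 0 := by rw [← hp, h, map_zero]
    have h2 : (n:ℤ) + -(n:ℤ) = 0 := by ring
    calc φ = φ * T (n:ℤ) * T (-(n:ℤ)) := by rw [mul_T_assoc, h2, T_zero, mul_one]
      _ = 0 := by rw [h1, zero_mul]
  obtain ⟨q0, hq0, hXq⟩ := p.exists_eq_pow_rootMultiplicity_mul_and_not_dvd hpne 0
  rw [Polynomial.C_0, sub_zero] at hq0 hXq
  set r := p.rootMultiplicity 0 with hr
  have hφeq : φ = Polynomial.toLaurent q0 * T ((r : ℤ) - n) := by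
    have h1 : Polynomial.toLaurent p = T (r:ℤ) * Polynomial.toLaurent q0 := by
      rw [hq0, map_mul, Polynomial.toLaurent_X_pow]
    have h2 : φ * T (n:ℤ) = T (r:ℤ) * Polynomial.toLaurent q0 := by rw [← hp, h1]
    have h3 : (n:ℤ) + -(n:ℤ) = 0 := by ring
    calc φ = φ * T (n:ℤ) * T (-(n:ℤ)) := by rw [mul_T_assoc, h3, T_zero, mul_one]
      _ = T (r:ℤ) * Polynomial.toLaurent q0 * T (-(n:ℤ)) := by rw [h2]
      _ = Polynomial.toLaurent q0 * T ((r:ℤ) - n) := by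
          rw [mul_comm (T (r:ℤ)), mul_T_assoc, sub_eq_add_neg]
  have hassoc : Associated (Polynomial.toLaurent q0) φ :=
    ⟨(isUnit_T ((r:ℤ) - n)).unit, by rw [IsUnit.unit_spec]; exact hφeq.symm⟩
  have hirrL : Irreducible (Polynomial.toLaurent q0) := hassoc.symm.irreducible hirr
  have hirrQ : Irreducible q0 := irreducible_of_toLaurent q0 hXq hirrL
  have hprime : Prime q0 := UniqueFactorizationMonoid.irreducible_iff_prime.mp hirrQ
  -- Main reduction: a divisibility counterexample produces a polynomial divisibility
  have main : ∀ N : ℕ, 0 < N → ∀ u : LaurentPolynomial ℤ, u ≠ 0 →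
      (∀ m : ℤ, u.coeff m = -1 ∨ u.coeff m = 0 ∨ u.coeff m = 1) →
      φ ∣ AddMonoidAlgebra.mapDomain (fun m : ℤ => (N : ℤ) * m) u →
      ∃ v : Polynomial ℤ, (∀ j, v.coeff j = -1 ∨ v.coeff j = 0 ∨ v.coeff j = 1) ∧
        v.coeff 0 ≠ 0 ∧ q0 ∣ Polynomial.expand ℤ N v := by
    intro N hN u hu hcu hdvd
    have hNne : (N:ℤ) ≠ 0 := Int.natCast_ne_zero.mpr hN.ne'
    have hS : u.coeff.support.Nonempty :=
      Finsupp.support_nonempty_iff.mpr (AddMonoidAlgebra.coeff_eq_zero.not.mpr hu)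
    set n₀ := u.coeff.support.min' hS with hn₀
    have hmin : ∀ m ∈ u.coeff.support, n₀ ≤ m := fun m hm => u.coeff.support.min'_le m hm
    set v : Polynomial ℤ := ∑ m ∈ u.coeff.support, Polynomial.C (u.coeff m) * X ^ (m - n₀).toNat with hv
    have hvcoeff : ∀ k : ℕ, v.coeff k = u.coeff (n₀ + (k:ℤ)) := by
      intro k
      rw [hv, Polynomial.finset_sum_coeff]
      have key : ∀ b ∈ u.coeff.support, (Polynomial.C (u.coeff b) * X ^ (b - n₀).toNat).coeff k
          = if b = n₀ + (k:ℤ) then u.coeff (n₀ + (k:ℤ)) else 0 := by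
        intro b hb
        rw [Polynomial.coeff_C_mul, Polynomial.coeff_X_pow]
        have hb' : 0 ≤ b - n₀ := sub_nonneg.mpr (hmin b hb)
        by_cases hbe : b = n₀ + (k:ℤ)
        · have ht : (b - n₀).toNat = k := by omega
          simp [hbe, ht]
        · have ht : (b - n₀).toNat ≠ k := by omega
          rw [if_neg fun h => ht h.symm, if_neg hbe, mul_zero]
      rw [Finset.sum_congr rfl key, Finset.sum_ite_eq' u.coeff.support (n₀ + (k:ℤ))
        (fun _ => u.coeff (n₀ + (k:ℤ)))]
      split_ifs with h
      · rfl
      · exact (Finsupp.notMem_support_iff.mp h).symm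
    have hv0 : v.coeff 0 ≠ 0 := by
      have hm0 : n₀ ∈ u.coeff.support := u.coeff.support.min'_mem hS
      rw [Finsupp.mem_support_iff] at hm0
      rw [hvcoeff 0]
      simpa using hm0
    have hvc : ∀ j, v.coeff j = -1 ∨ v.coeff j = 0 ∨ v.coeff j = 1 := fun j => by
      rw [hvcoeff j]; exact hcu _
    have hL : ∀ t : ℤ, (AddMonoidAlgebra.mapDomain (fun m : ℤ => (N:ℤ)*m) u).coeff t
        = if (N:ℤ) ∣ t then u.coeff (t / N) else 0 := by
      intro t
      have hinj : Function.Injective (fun m : ℤ => (N:ℤ)*m) := fun a b h => by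
        exact mul_left_cancel₀ hNne h
      split_ifs with h
      · obtain ⟨c, rfl⟩ := h
        rw [Int.mul_ediv_cancel_left _ hNne]
        exact Finsupp.mapDomain_apply hinj u.coeff c
      · refine Finsupp.mapDomain_notin_range _ _ fun hmem => ?_
        obtain ⟨a, ha⟩ := hmem
        exact h ⟨a, ha.symm⟩
    have hid : AddMonoidAlgebra.mapDomain (fun m : ℤ => (N:ℤ) * m) u
        = T ((N:ℤ) * n₀) * Polynomial.toLaurent (Polynomial.expand ℤ N v) := by
      apply LaurentPolynomial.ext
      intro t
      have hT : (T ((N:ℤ)*n₀) : LaurentPolynomial ℤ)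
          = AddMonoidAlgebra.single ((N:ℤ)*n₀) 1 := rfl
      rw [hL, hT, AddMonoidAlgebra.coeff_single_mul_apply, one_mul, toLaurent_apply_int]
      by_cases hdb : (N:ℤ) ∣ t
      · obtain ⟨s, rfl⟩ := hdb
        rw [if_pos ⟨s, rfl⟩, Int.mul_ediv_cancel_left _ hNne]
        by_cases hs : n₀ ≤ s
        · obtain ⟨k, rfl⟩ : ∃ k : ℕ, s = n₀ + (k:ℤ) := ⟨(s - n₀).toNat, by omega⟩
          have h2 : -((N:ℤ)*n₀) + (N:ℤ)*(n₀+(k:ℤ)) = ((N*k : ℕ) : ℤ) := by push_cast; ring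
          rw [h2, if_pos (Int.natCast_nonneg _), Int.toNat_natCast,
            Polynomial.coeff_expand hN, if_pos (dvd_mul_right N k),
            Nat.mul_div_cancel_left k hN]
          exact (hvcoeff k).symm
        · have hns : u.coeff s = 0 := by
            by_contra hns
            exact hs (hmin s (Finsupp.mem_support_iff.mpr hns))
          have hneg : (N:ℤ)*(s - n₀) < 0 :=
            mul_neg_of_pos_of_neg (by exact_mod_cast hN) (by omega)
          have h2 : ¬ (0:ℤ) ≤ -((N:ℤ)*n₀) + (N:ℤ)*s := by
            rw [show -((N:ℤ)*n₀) + (N:ℤ)*s = (N:ℤ)*(s-n₀) from by ring]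
            exact not_le.mpr hneg
          rw [hns, if_neg h2]
      · rw [if_neg hdb]
        split_ifs with h1
        · rw [Polynomial.coeff_expand hN, if_neg ?_]
          intro hdvd2
          apply hdb
          have h3 : (N:ℤ) ∣ (-((N:ℤ)*n₀) + t) := by
            obtain ⟨c, hc⟩ := hdvd2
            refine ⟨c, ?_⟩
            have h4 : ((-((N:ℤ)*n₀) + t).toNat : ℤ) = -((N:ℤ)*n₀) + t := Int.toNat_of_nonneg h1
            rw [← h4, hc]
            push_cast
            ring
          obtain ⟨c, hc⟩ := h3
          exact ⟨c + n₀, by linarith [hc]⟩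
        · rfl
    have hdvd2 : Polynomial.toLaurent q0 ∣ Polynomial.toLaurent (Polynomial.expand ℤ N v) := by
      have h1 : φ ∣ T ((N:ℤ)*n₀) * Polynomial.toLaurent (Polynomial.expand ℤ N v) :=
        hid ▸ hdvd
      have h2 : Polynomial.toLaurent q0 ∣
          T ((N:ℤ)*n₀) * Polynomial.toLaurent (Polynomial.expand ℤ N v) :=
        (hassoc.dvd_iff_dvd_left).mpr h1
      have h3 := h2.mul_left (T (-((N:ℤ)*n₀)))
      have h4 : T (-((N:ℤ)*n₀)) * (T ((N:ℤ)*n₀) * Polynomial.toLaurent (Polynomial.expand ℤ N v))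
          = Polynomial.toLaurent (Polynomial.expand ℤ N v) := by
        have h5 : -((N:ℤ)*n₀) + (N:ℤ)*n₀ = 0 := by ring
        rw [← mul_assoc, ← T_add, h5, T_zero, one_mul]
      rwa [h4] at h3
    exact ⟨v, hvc, hv0, dvd_of_toLaurent_dvd q0 _ hprime hXq hdvd2⟩
  -- Case split
  by_cases hA : IsUnit q0.leadingCoeff ∧ IsUnit (q0.coeff 0) ∧ 1 ≤ q0.natDegree
  · obtain ⟨hlu, h0u, hdeg⟩ := hA
    set P : Polynomial ℤ := Polynomial.C q0.leadingCoeff * q0 with hP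
    have hε : q0.leadingCoeff * q0.leadingCoeff = 1 := by
      rcases Int.isUnit_iff.mp hlu with h | h <;> rw [h] <;> norm_num
    have hPmonic : P.Monic := by
      rw [Polynomial.Monic, hP, Polynomial.leadingCoeff_mul, Polynomial.leadingCoeff_C]
      exact hε
    have hPassoc : Associated q0 P :=
      ⟨(Polynomial.isUnit_C.mpr hlu).unit, by rw [IsUnit.unit_spec]; exact mul_comm _ _⟩
    have hPirr : Irreducible P := hPassoc.irreducible hirrQ
    have hPdeg : P.natDegree = q0.natDegree := by
      rw [hP, Polynomial.natDegree_C_mul hlu.ne_zero]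
    set MP : Polynomial ℂ := P.map (Int.castRingHom ℂ) with hMP
    have haeval : ∀ z : ℂ, MP.IsRoot z → Polynomial.aeval z q0 = 0 := by
      intro z hz
      have h1 : Polynomial.aeval z P = 0 := by
        rw [Polynomial.aeval_def, Polynomial.eval₂_eq_eval_map, algebraMap_int_eq]
        exact hz
      rw [hP, map_mul, Polynomial.aeval_C] at h1
      rcases Int.isUnit_iff.mp hlu with h | h <;> rw [h] at h1 <;> simpa using h1
    by_cases hall : ∀ z : ℂ, MP.IsRoot z → ‖z‖ = 1
    · -- Kronecker case: contradiction with hnc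
      exfalso
      have hdegP : 1 ≤ P.natDegree := hPdeg ▸ hdeg
      have hMPne : MP ≠ 0 := (hPmonic.map (Int.castRingHom ℂ)).ne_zero
      have hMPdeg : MP.natDegree = P.natDegree := hPmonic.natDegree_map _
      have hMP0 : 0 < MP.degree := by
        rw [Polynomial.degree_eq_natDegree hMPne, hMPdeg]
        exact_mod_cast (by omega : 0 < P.natDegree)
      obtain ⟨lam, hroot⟩ := Complex.exists_root hMP0
      have haevalP : Polynomial.aeval lam P = 0 := by
        rw [Polynomial.aeval_def, Polynomial.eval₂_eq_eval_map, algebraMap_int_eq]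
        exact hroot
      have hint : IsIntegral ℤ lam := ⟨P, hPmonic, by rw [← Polynomial.aeval_def]; exact haevalP⟩
      have hintQ : IsIntegral ℚ lam := hint.tower_top
      haveI hFD : FiniteDimensional ℚ ℚ⟮lam⟯ := IntermediateField.adjoin.finiteDimensional hintQ
      haveI : NumberField ℚ⟮lam⟯ := ⟨⟩
      set x : ℚ⟮lam⟯ := IntermediateField.AdjoinSimple.gen ℚ lam with hx
      have hgen : algebraMap ℚ⟮lam⟯ ℂ x = lam := IntermediateField.AdjoinSimple.algebraMap_gen ℚ lam
      have haevx : Polynomial.aeval x P = 0 := by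
        apply (algebraMap ℚ⟮lam⟯ ℂ).injective
        rw [map_zero, ← Polynomial.aeval_algebraMap_apply, hgen]
        exact haevalP
      have hxint : IsIntegral ℤ x := ⟨P, hPmonic, by rw [← Polynomial.aeval_def]; exact haevx⟩
      have hconj : ∀ ψ : ℚ⟮lam⟯ →+* ℂ, ‖ψ x‖ = 1 := by
        intro ψ
        apply hall
        have h1 : Polynomial.aeval (ψ x) P = ψ (Polynomial.aeval x P) := by
          rw [Polynomial.aeval_def, Polynomial.aeval_def, Polynomial.hom_eval₂,
            RingHom.ext_int (ψ.comp (algebraMap ℤ ℚ⟮lam⟯)) (algebraMap ℤ ℂ)]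
        show MP.IsRoot (ψ x)
        show Polynomial.eval (ψ x) MP = 0
        rw [hMP, Polynomial.eval_map, ← algebraMap_int_eq,
          ← Polynomial.aeval_def, h1, haevx, map_zero]
      obtain ⟨k, hk0, hk⟩ := NumberField.Embeddings.pow_eq_one_of_norm_eq_one ℚ⟮lam⟯ ℂ hxint hconj
      have hlamk : lam ^ k = 1 := by
        have h1 := congrArg (algebraMap ℚ⟮lam⟯ ℂ) hk
        rwa [map_pow, hgen, map_one] at h1
      have hPQirr : Irreducible (P.map (Int.castRingHom ℚ)) :=
        (Polynomial.IsPrimitive.Int.irreducible_iff_irreducible_map_cast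
          hPmonic.isPrimitive).mp hPirr
      have haevalQ : Polynomial.aeval lam (P.map (Int.castRingHom ℚ)) = 0 := by
        rw [← algebraMap_int_eq, Polynomial.aeval_map_algebraMap]
        exact haevalP
      have hmin : minpoly ℚ lam = P.map (Int.castRingHom ℚ) :=
        (minpoly.eq_of_irreducible_of_monic hPQirr haevalQ (hPmonic.map _)).symm
      have hdvdQ : P.map (Int.castRingHom ℚ) ∣ ((X : Polynomial ℚ) ^ k - 1) := by
        rw [← hmin]
        exact minpoly.dvd ℚ lam (by simp [hlamk])
      have hXk : ((X : Polynomial ℤ) ^ k - 1).Monic := by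
        have := Polynomial.monic_X_pow_sub_C (1:ℤ) (by omega : k ≠ 0)
        simpa using this
      have hdvdZ : P ∣ ((X : Polynomial ℤ) ^ k - 1) := by
        refine (Polynomial.IsPrimitive.Int.dvd_iff_map_cast_dvd_map_cast _ _
          hPmonic.isPrimitive).mpr ?_
        rw [Polynomial.map_sub, Polynomial.map_pow, Polynomial.map_X, Polynomial.map_one]
        exact hdvdQ
      have hq0dvd : q0 ∣ ((X : Polynomial ℤ) ^ k - 1) := hPassoc.dvd_iff_dvd_left.mpr hdvdZ
      have hLk : φ ∣ (T (k:ℤ) - 1 : LaurentPolynomial ℤ) := by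
        have h1 : Polynomial.toLaurent q0 ∣ Polynomial.toLaurent ((X : Polynomial ℤ) ^ k - 1) :=
          map_dvd _ hq0dvd
        have h2 : Polynomial.toLaurent ((X : Polynomial ℤ)^k - 1) = T (k:ℤ) - 1 := by
          rw [map_sub, Polynomial.toLaurent_X_pow, map_one]
        rw [h2] at h1
        exact hassoc.dvd_iff_dvd_left.mp h1
      exact hnc k (Int.natCast_ne_zero.mpr (by omega)) hLk
    · push_neg at hall
      obtain ⟨lam, hroot, hnorm⟩ := hall
      have haq : Polynomial.aeval lam q0 = 0 := haeval lam hroot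
      rcases lt_or_gt_of_ne hnorm with hlt | hgt
      · -- small root
        obtain ⟨N, hNlt⟩ := exists_pow_lt_of_lt_one (by norm_num : (0:ℝ) < 1/3) hlt
        refine ⟨N+1, Nat.succ_pos N, fun u hu hc hdvd => ?_⟩
        obtain ⟨v, hvc, hv0, hdv⟩ := main (N+1) (Nat.succ_pos N) u hu
          (fun m => by simpa using hc m) hdvd
        obtain ⟨s, hs⟩ := hdv
        have hveval : Polynomial.aeval (lam ^ (N+1)) v = 0 := by
          have h1 : Polynomial.aeval lam (Polynomial.expand ℤ (N+1) v) = 0 := by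
            rw [hs, map_mul, haq, zero_mul]
          rwa [Polynomial.expand_aeval] at h1
        refine aeval_ne_zero_small v hv0 hvc _ ?_ hveval
        rw [norm_pow]
        have h2 : ‖lam‖^(N+1) ≤ ‖lam‖^N :=
          pow_le_pow_of_le_one (norm_nonneg _) hlt.le (Nat.le_succ N)
        linarith
      · -- big root
        obtain ⟨N, hNlt⟩ := pow_unbounded_of_one_lt (3:ℝ) hgt
        refine ⟨N+1, Nat.succ_pos N, fun u hu hc hdvd => ?_⟩
        obtain ⟨v, hvc, hv0, hdv⟩ := main (N+1) (Nat.succ_pos N) u hu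
          (fun m => by simpa using hc m) hdvd
        obtain ⟨s, hs⟩ := hdv
        have hveval : Polynomial.aeval (lam ^ (N+1)) v = 0 := by
          have h1 : Polynomial.aeval lam (Polynomial.expand ℤ (N+1) v) = 0 := by
            rw [hs, map_mul, haq, zero_mul]
          rwa [Polynomial.expand_aeval] at h1
        have hvne : v ≠ 0 := fun h => hv0 (by simp [h])
        refine aeval_ne_zero_big v hvne hvc _ ?_ hveval
        rw [norm_pow]
        have h2 : ‖lam‖^N ≤ ‖lam‖^(N+1) :=
          pow_le_pow_right₀ (by linarith) (Nat.le_succ N)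
        linarith
  · -- q0 must have unit extreme coefficients: derive contradiction from any divisibility
    refine ⟨1, one_pos, fun u hu hc hdvd => ?_⟩
    obtain ⟨v, hvc, hv0, hdv⟩ := main 1 one_pos u hu (fun m => by simpa using hc m) hdvd
    rw [Polynomial.expand_one] at hdv
    obtain ⟨s, hs⟩ := hdv
    have hvne : v ≠ 0 := fun h => hv0 (by simp [h])
    apply hA
    have hl : IsUnit q0.leadingCoeff := by
      have h1 : v.leadingCoeff = q0.leadingCoeff * s.leadingCoeff := by
        rw [hs, Polynomial.leadingCoeff_mul]
      have h2 : IsUnit v.leadingCoeff := by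
        rw [Int.isUnit_iff]
        have h3 : v.leadingCoeff ≠ 0 := Polynomial.leadingCoeff_ne_zero.mpr hvne
        rcases hvc v.natDegree with h | h | h
        · right; exact h
        · exact absurd h h3
        · left; exact h
      exact isUnit_of_mul_isUnit_left (h1 ▸ h2)
    have h0' : IsUnit (q0.coeff 0) := by
      have h1 : v.coeff 0 = q0.coeff 0 * s.coeff 0 := by
        rw [hs, Polynomial.mul_coeff_zero]
      have h2 : IsUnit (v.coeff 0) := by
        rw [Int.isUnit_iff]
        rcases hvc 0 with h | h | h
        · right; exact h
        · exact absurd h hv0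
        · left; exact h
      exact isUnit_of_mul_isUnit_left (h1 ▸ h2)
    refine ⟨hl, h0', ?_⟩
    by_contra hd
    push_neg at hd
    have h5 : q0 = Polynomial.C (q0.coeff 0) :=
      Polynomial.eq_C_of_natDegree_eq_zero (by omega)
    exact hirrQ.not_isUnit (h5 ▸ Polynomial.isUnit_C.mpr h0')
end

section
/- Let p ∈ ℤ[x] be a polynomial with a complex root λ satisfying |λ| > 2. If u ∈ ℤ[x] is a nonzero polynomial with all coefficients in {-1,0,1}, then p does not divide u. -/
lemma geom_aux_flat (r : ℝ) (hr : 2 ≤ r) :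
    ∀ d : ℕ, ∑ i ∈ Finset.range d, r ^ i ≤ r ^ d - 1 := by
  intro d
  induction d with
  | zero => simp
  | succ n ih =>
    rw [Finset.sum_range_succ, pow_succ]
    nlinarith [pow_nonneg (by linarith : (0:ℝ) ≤ r) n]

/-- If `p ∈ ℤ[x]` has a complex root `λ` with `|λ| > 2`, then `p` divides no nonzero
polynomial all of whose coefficients lie in `{-1,0,1}`. -/
theorem not_dvd_flat_of_large_root (p : Polynomial ℤ) (lam : ℂ)
    (hroot : Polynomial.aeval lam p = 0) (habs : 2 < ‖lam‖)
    (u : Polynomial ℤ) (hu : u ≠ 0)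
    (hflat : ∀ n : ℕ, u.coeff n ∈ ({-1, 0, 1} : Set ℤ)) :
    ¬ p ∣ u := by
  intro hdvd
  have h0 : Polynomial.aeval lam u = 0 := by
    obtain ⟨q, rfl⟩ := hdvd
    simp [hroot]
  set d := u.natDegree with hd
  have hsum : ∑ i ∈ Finset.range (d + 1), (u.coeff i : ℂ) * lam ^ i = 0 := by
    have h := Polynomial.aeval_eq_sum_range (p := u) lam
    rw [h0] at h
    rw [← h.symm]
    apply Finset.sum_congr rfl
    intro i _
    simp [zsmul_eq_mul]
  rw [Finset.sum_range_succ] at hsum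
  have hlead : (u.coeff d : ℂ) * lam ^ d = -∑ i ∈ Finset.range d, (u.coeff i : ℂ) * lam ^ i :=
    eq_neg_of_add_eq_zero_right hsum
  set r := ‖lam‖ with hr
  have hcd : u.coeff d ≠ 0 := Polynomial.leadingCoeff_ne_zero.mpr hu
  have hcd1 : |u.coeff d| = 1 := by
    have h := hflat d
    simp only [Set.mem_insert_iff, Set.mem_singleton_iff] at h
    rcases h with h | h | h
    · simp [h]
    · exact absurd h hcd
    · simp [h]
  have hLHS : ‖(u.coeff d : ℂ) * lam ^ d‖ = r ^ d := by
    rw [norm_mul, norm_pow, Complex.norm_intCast]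
    rw [show |(u.coeff d : ℝ)| = ((|u.coeff d| : ℤ) : ℝ) by push_cast; ring, hcd1]
    simp [hr]
  have hbound : ∀ i ∈ Finset.range d,
      ‖(u.coeff i : ℂ) * lam ^ i‖ ≤ r ^ i := by
    intro i _
    rw [norm_mul, norm_pow, Complex.norm_intCast]
    have h1 : |(u.coeff i : ℝ)| ≤ 1 := by
      have h := hflat i
      simp only [Set.mem_insert_iff, Set.mem_singleton_iff] at h
      rcases h with h | h | h <;> simp [h]
    have hri : (0:ℝ) ≤ r ^ i := pow_nonneg (by positivity) i
    nlinarith [abs_nonneg ((u.coeff i : ℝ))]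
  have hRHS : ‖(u.coeff d : ℂ) * lam ^ d‖ ≤ ∑ i ∈ Finset.range d, r ^ i := by
    rw [hlead, norm_neg]
    exact le_trans (norm_sum_le _ _) (Finset.sum_le_sum hbound)
  have hgeom := geom_aux_flat r (le_of_lt habs) d
  rw [hLHS] at hRHS
  linarith
end

section
/- Let A = ℤ^d and B any nontrivial group, G = A ≀ B with projection π: G → A. Let δ₁, δ₂ ∈ G with δ₁ ≠ δ₂ and π(δ₁) = π(δ₂), and set δ' = δ₁^{-1}δ₂ (a nontrivial element of ⊕_{ℤ^d} B). If r₁,…,rₙ ∈ G have pairwise distinct projections to ℤ^d, then the conjugates γᵢ = rᵢ δ' rᵢ^{-1} are cube independent. -/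
private lemma sum_ofFn_cancel {B : Type*} [AddGroup B] :
    ∀ {n : ℕ} (t1 t2 : Fin n → B) (k : Fin n), (∀ i, i ≠ k → t1 i = t2 i) →
      (List.ofFn t1).sum = (List.ofFn t2).sum → t1 k = t2 k := by
  intro n
  induction n with
  | zero => exact fun _ _ k => k.elim0
  | succ m ih =>
    intro t1 t2 k h hsum
    rw [List.ofFn_succ, List.ofFn_succ, List.sum_cons, List.sum_cons] at hsum
    rcases Fin.eq_zero_or_eq_succ k with rfl | ⟨k', rfl⟩
    · have htail : (fun i => t1 (Fin.succ i)) = (fun i => t2 (Fin.succ i)) :=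
        funext fun i => h _ (Fin.succ_ne_zero i)
      rw [htail] at hsum
      exact add_right_cancel hsum
    · have h0 : t1 0 = t2 0 := h 0 (Fin.succ_ne_zero k').symm
      rw [h0] at hsum
      have hsum' := add_left_cancel hsum
      exact ih (fun i => t1 i.succ) (fun i => t2 i.succ) k'
        (fun i hi => h _ (fun hc => hi (Fin.succ_injective _ hc))) hsum'

/-- Cube independence in `ℤ^d ≀ B`: if `δ' ≠ 0` is a configuration in `⊕_{ℤ^d} B`
(written additively, `B` any nontrivial group written additively), and `γᵢ` is the
conjugate of `δ'` by an element `rᵢ` of the wreath product, whose projection to `ℤ^d`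
is `v i` and whose lamp part is `f i` (so `γᵢ = f i + shift_{v i} δ' - f i`), with the
`v i` pairwise distinct, then the `2ⁿ` products `γ₁^{ε₁}⋯γₙ^{εₙ}`, `εᵢ ∈ {0,1}`, are
pairwise distinct. -/
theorem wreath_conjugates_cube_independent {B : Type*} [AddGroup B] (d n : ℕ)
    (δ' : (Fin d → ℤ) →₀ B) (hδ : δ' ≠ 0)
    (v : Fin n → (Fin d → ℤ)) (hv : Function.Injective v)
    (f : Fin n → ((Fin d → ℤ) →₀ B)) (γ : Fin n → ((Fin d → ℤ) →₀ B))
    (hγ : ∀ i, γ i = f i + Finsupp.embDomain ⟨fun x => v i + x, add_right_injective (v i)⟩ δ' - f i) :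
    Function.Injective (fun ε : Fin n → Bool =>
      (List.ofFn fun i => if ε i then γ i else 0).sum) := by
  haveI : WellFoundedLT (Fin d) := Finite.to_wellFoundedLT
  intro ε ε' hsum
  by_contra hne
  simp only at hsum
  -- set of differing indices
  have hDne : (Finset.univ.filter fun i => ε i ≠ ε' i).Nonempty := by
    by_contra h
    rw [Finset.not_nonempty_iff_eq_empty, Finset.filter_eq_empty_iff] at h
    exact hne (funext fun i => not_not.mp (h (Finset.mem_univ i)))
  obtain ⟨i₀, hi₀D, hmax⟩ := (Finset.univ.filter fun i => ε i ≠ ε' i).exists_max_image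
    (fun i => (toLex (v i) : Lex (Fin d → ℤ))) hDne
  have hsupp : δ'.support.Nonempty := Finsupp.support_nonempty_iff.mpr hδ
  obtain ⟨a, haS, hamax⟩ := δ'.support.exists_max_image (fun b => (toLex b : Lex (Fin d → ℤ))) hsupp
  set x : Fin d → ℤ := v i₀ + a with hx
  -- apply evaluation at x
  have hval : (List.ofFn fun i => ((if ε i then γ i else 0) : (Fin d → ℤ) →₀ B) x).sum
      = (List.ofFn fun i => ((if ε' i then γ i else 0) : (Fin d → ℤ) →₀ B) x).sum := by
    have := congrArg (Finsupp.applyAddHom (M := B) x) hsum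
    rwa [map_list_sum, map_list_sum, List.map_ofFn, List.map_ofFn] at this
  -- value of γ i at x, for i in D, i ≠ i₀, is 0
  have hzero : ∀ i, i ≠ i₀ → ε i ≠ ε' i → γ i x = 0 := by
    intro i hne' hd
    have hiD : i ∈ Finset.univ.filter fun j => ε j ≠ ε' j := by
      simp [hd]
    have hlt : toLex (v i) < toLex (v i₀) :=
      lt_of_le_of_ne (hmax i hiD) (fun hc => hne' (hv (toLex.injective hc)))
    have hxb : x = v i + (v i₀ + a - v i) := by
      abel_nf
      exact hx
    have hbn : δ' (v i₀ + a - v i) = 0 := by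
      rw [← Finsupp.notMem_support_iff]
      intro hmem
      have hle := hamax _ hmem
      have : toLex a < toLex (v i₀ + a - v i) := by
        rw [toLex_sub, toLex_add]
        have := sub_lt_sub_right (add_lt_add_right hlt (toLex a)) (toLex (v i))
        simpa using lt_sub_iff_add_lt.mpr (by
          rw [add_comm]
          exact add_lt_add_left hlt (toLex a))
      exact absurd hle (not_le.mpr this)
    rw [hγ i, Finsupp.sub_apply, Finsupp.add_apply]
    have : (Finsupp.embDomain ⟨fun y => v i + y, add_right_injective (v i)⟩ δ') x = 0 := by
      rw [hxb]
      rw [show (v i + (v i₀ + a - v i)) =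
        (⟨fun y => v i + y, add_right_injective (v i)⟩ : (Fin d → ℤ) ↪ (Fin d → ℤ))
          (v i₀ + a - v i) from rfl]
      rw [Finsupp.embDomain_apply_self, hbn]
    rw [hxb] at this ⊢
    rw [this]
    simp
  -- cancel
  have hcan := sum_ofFn_cancel (fun i => ((if ε i then γ i else 0) : (Fin d → ℤ) →₀ B) x)
    (fun i => ((if ε' i then γ i else 0) : (Fin d → ℤ) →₀ B) x) i₀
    (by
      intro i hi
      by_cases hd : ε i = ε' i
      · simp [hd]
      · have h0 := hzero i hi hd
        rcases Bool.eq_false_or_eq_true (ε i) with h1 | h1 <;>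
          rcases Bool.eq_false_or_eq_true (ε' i) with h2 | h2 <;>
          simp [h1, h2, h0])
    hval
  -- at i₀: one side is γ i₀ x, the other 0, derive δ' a ≠ 0 contradiction
  have hδa : δ' a ≠ 0 := Finsupp.mem_support_iff.mp haS
  have hγi₀ : γ i₀ x = f i₀ x + δ' a - f i₀ x := by
    rw [hγ i₀, Finsupp.sub_apply, Finsupp.add_apply]
    rw [show x = (⟨fun y => v i₀ + y, add_right_injective (v i₀)⟩ :
      (Fin d → ℤ) ↪ (Fin d → ℤ)) a from rfl, Finsupp.embDomain_apply_self]
  have hd₀ : ε i₀ ≠ ε' i₀ := by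
    have := Finset.mem_filter.mp hi₀D
    exact this.2
  have hγx : γ i₀ x ≠ 0 := by
    rw [hγi₀]
    intro hc
    apply hδa
    have h2 : f i₀ x + δ' a = f i₀ x := sub_eq_zero.mp hc
    exact add_left_cancel (h2.trans (add_zero (f i₀ x)).symm)
  rcases Bool.eq_false_or_eq_true (ε i₀) with h1 | h1 <;>
    rcases Bool.eq_false_or_eq_true (ε' i₀) with h2 | h2
  · exact hd₀ (h1.trans h2.symm)
  · simp [h1, h2] at hcan
    exact hγx hcan
  · simp [h1, h2] at hcan
    exact hγx hcan.symm
  · exact hd₀ (h1.trans h2.symm)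
end
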